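/- Let V be a finite set, C ⊆ V, S ⊆ V with S ∩ range(φ) = ∅, and φ : V \ C → V \ S injective. For x ∈ S, let t(x) denote the number of iterations of φ needed starting from x to reach C (finite by termination). Then the orbits starting from distinct elements of S are pairwise disjoint, and consequently ∑_{x ∈ S} t(x) ≤ |V|. -/

import Mathlib

open scoped Classical

/-- Universal framework iteration-count bound: with `S` disjoint from the range of
`φ` on `V \ C` and `φ` injective there, letting `t x` be the (first) hitting time
of `C` for the orbit of the step function started at `x ∈ S`, the orbits of
distinct starting points are pairwise disjoint and `∑ x ∈ S, t x ≤ |V|`. -/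
theorem stmt_3 {V : Type*} [Fintype V] (C : Set V) (S : Finset V) (φ : V → V)
    (hφS : ∀ v ∉ C, φ v ∉ S) (hφinj : Set.InjOn φ Cᶜ)
    (t : V → ℕ)
    (ht : ∀ x ∈ S, (fun v => if v ∈ C then v else φ v)^[t x] x ∈ C ∧
      ∀ i < t x, (fun v => if v ∈ C then v else φ v)^[i] x ∉ C) :
    (∀ x ∈ S, ∀ y ∈ S, x ≠ y → ∀ m ≤ t x, ∀ n ≤ t y,
      (fun v => if v ∈ C then v else φ v)^[m] x ≠
        (fun v => if v ∈ C then v else φ v)^[n] y) ∧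
    ∑ x ∈ S, t x ≤ Fintype.card V := by
  set f : V → V := fun v => if v ∈ C then v else φ v with hf
  have hstep : ∀ (k : ℕ) (z : V), f^[k] z ∉ C → f^[k+1] z = φ (f^[k] z) := by
    intro k z hz
    rw [Function.iterate_succ_apply']
    exact if_neg hz
  have key : ∀ m n (x : V), x ∈ S → ∀ y ∈ S, m ≤ t x → n ≤ t y →
      f^[m] x = f^[n] y → m = n ∧ x = y := by
    intro m
    induction m with
    | zero =>
      intro n x hx y hy hm hn heq
      cases n with
      | zero => exact ⟨rfl, heq⟩
      | succ n =>
        exfalso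
        have hyC : f^[n] y ∉ C := (ht y hy).2 n (lt_of_lt_of_le (Nat.lt_succ_self n) hn)
        have h2 : f^[n+1] y = φ (f^[n] y) := hstep n y hyC
        have : x = φ (f^[n] y) := by simpa [h2] using heq
        exact hφS _ hyC (this ▸ hx)
    | succ m ih =>
      intro n x hx y hy hm hn heq
      cases n with
      | zero =>
        exfalso
        have hxC : f^[m] x ∉ C := (ht x hx).2 m (lt_of_lt_of_le (Nat.lt_succ_self m) hm)
        have h1 : f^[m+1] x = φ (f^[m] x) := hstep m x hxC
        have : y = φ (f^[m] x) := by simpa [h1] using heq.symm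
        exact hφS _ hxC (this ▸ hy)
      | succ n =>
        have hxC : f^[m] x ∉ C := (ht x hx).2 m (lt_of_lt_of_le (Nat.lt_succ_self m) hm)
        have hyC : f^[n] y ∉ C := (ht y hy).2 n (lt_of_lt_of_le (Nat.lt_succ_self n) hn)
        have h1 : f^[m+1] x = φ (f^[m] x) := hstep m x hxC
        have h2 : f^[n+1] y = φ (f^[n] y) := hstep n y hyC
        have heq' : f^[m] x = f^[n] y :=
          hφinj hxC hyC (by rw [← h1, ← h2, heq])
        obtain ⟨hmn, hxy⟩ := ih n x hx y hy (Nat.le_of_succ_le hm) (Nat.le_of_succ_le hn) heq'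
        exact ⟨by rw [hmn], hxy⟩
  constructor
  · intro x hx y hy hxy m hm n hn heq
    exact hxy (key m n x hx y hy hm hn heq).2
  · have hcard : ∑ x ∈ S, t x = (S.sigma fun x => Finset.range (t x)).card := by
      rw [Finset.card_sigma]
      simp
    rw [hcard, ← Finset.card_univ]
    apply Finset.card_le_card_of_injOn (fun p => f^[p.2] p.1)
    · intro _ _
      exact Finset.mem_univ _
    · intro p hp q hq heq
      simp only [Finset.mem_coe, Finset.mem_sigma, Finset.mem_range] at hp hq
      obtain ⟨hmn, hxy⟩ := key p.2 q.2 p.1 hp.1 q.1 hq.1 hp.2.le hq.2.le heq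
      exact Sigma.ext hxy (heq_of_eq hmn)
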